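/- Let n ≥ 2 and let P be an n×n real column stochastic matrix with P_{jj} > 0 for all j and such that for every pair of indices (j, i) there exists m ≥ 1 with (P^m)_{ji} > 0. Let τ̄ ∈ ℕ and let τ(k, j, i) ∈ {0, …, τ̄} be delay functions with τ(k, j, j) = 0 for all k, j. Let y and z both evolve by the delayed iteration driven by P and τ, with initial conditions y[0] = y₀ ∈ ℝⁿ and z[0] = 𝟙 (the all-ones vector). Then z_j[k] > 0 for all j and k, and for every j, the ratio μ_j[k] = y_j[k] / z_j[k] converges as k → ∞ to (Σ_{l=1}^n y₀(l)) / n, the average of the initial values. -/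

import Mathlib

open Matrix Filter

/-- An `n × n` real matrix is column stochastic if all entries are nonnegative and
each column sums to `1`. -/
def ColStoch {N : Type*} [Fintype N] (A : Matrix N N ℝ) : Prop :=
  (∀ j i, 0 ≤ A j i) ∧ ∀ i, ∑ j, A j i = 1

/-- The delayed iteration driven by weight matrix `P` and delay functions `τ`:
`x_j[k+1] = Σ_i Σ_{s=0}^{k} [s + τ(s,j,i) = k] ⬝ P_{ji} ⬝ x_i[s]`. -/
def DelayedIter {n : ℕ} (P : Matrix (Fin n) (Fin n) ℝ)
    (τ : ℕ → Fin n → Fin n → ℕ) (x : ℕ → Fin n → ℝ) : Prop :=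
  ∀ k j, x (k + 1) j =
    ∑ i, ∑ s ∈ Finset.range (k + 1), if s + τ s j i = k then P j i * x s i else 0

namespace PushSum

variable {n : ℕ}

/-- augmented index: node together with remaining delay -/
abbrev V (n τbar : ℕ) := Fin n × Fin (τbar + 1)

/-- augmented transition matrix at time `k` -/
def M (τbar : ℕ) (P : Matrix (Fin n) (Fin n) ℝ) (τ : ℕ → Fin n → Fin n → ℕ) (k : ℕ) :
    Matrix (V n τbar) (V n τbar) ℝ := fun a b =>
  (if (b.2 : ℕ) = 0 ∧ (a.2 : ℕ) = τ k a.1 b.1 then P a.1 b.1 else 0) +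
  (if b.1 = a.1 ∧ (a.2 : ℕ) + 1 = (b.2 : ℕ) then 1 else 0)

/-- `Phi t k = M (k+t-1) * ... * M k` -/
def Phi (τbar : ℕ) (P : Matrix (Fin n) (Fin n) ℝ) (τ : ℕ → Fin n → Fin n → ℕ) :
    ℕ → ℕ → Matrix (V n τbar) (V n τbar) ℝ
  | 0, _ => 1
  | (t+1), k => M τbar P τ (k + t) * Phi τbar P τ t k

variable {τbar : ℕ} {P : Matrix (Fin n) (Fin n) ℝ} {τ : ℕ → Fin n → Fin n → ℕ}

section basic

lemma M_nonneg (hP1 : ∀ j i, 0 ≤ P j i) (k : ℕ) (a b : V n τbar) :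
    0 ≤ M τbar P τ k a b := by
  unfold M
  apply add_nonneg
  · split
    · exact hP1 _ _
    · exact le_refl 0
  · split
    · exact zero_le_one
    · exact le_refl 0

lemma fin_eq_iff (c : ℕ) (hc : c ≤ τbar) (d : Fin (τbar+1)) :
    ((d : ℕ) = c) ↔ d = ⟨c, by omega⟩ := by
  rw [Fin.ext_iff]

lemma M_col (hP2 : ∀ i, ∑ j, P j i = 1) (hτle : ∀ k j i, τ k j i ≤ τbar)
    (k : ℕ) (b : V n τbar) : ∑ a, M τbar P τ k a b = 1 := by
  obtain ⟨i, e⟩ := b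
  rw [Fintype.sum_prod_type]
  unfold M
  simp only
  by_cases he : (e : ℕ) = 0
  · have h1 : ∀ j : Fin n,
        (∑ d : Fin (τbar+1),
          ((if (e:ℕ) = 0 ∧ (d:ℕ) = τ k j i then P j i else 0) +
           (if i = j ∧ (d:ℕ) + 1 = (e:ℕ) then (1:ℝ) else 0))) = P j i := by
      intro j
      rw [Finset.sum_add_distrib]
      have h2 : (∑ d : Fin (τbar+1), if i = j ∧ (d:ℕ) + 1 = (e:ℕ) then (1:ℝ) else 0) = 0 := by
        apply Finset.sum_eq_zero
        intro d _
        rw [if_neg]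
        rintro ⟨_, h⟩; omega
      rw [h2, add_zero]
      simp only [he, true_and, fin_eq_iff (τ k j i) (hτle k j i)]
      rw [Finset.sum_ite_eq' Finset.univ]
      simp
    rw [Finset.sum_congr rfl (fun j _ => h1 j), hP2]
  · have h1 : ∀ j : Fin n,
        (∑ d : Fin (τbar+1),
          ((if (e:ℕ) = 0 ∧ (d:ℕ) = τ k j i then P j i else 0) +
           (if i = j ∧ (d:ℕ) + 1 = (e:ℕ) then (1:ℝ) else 0))) =
        (if i = j then (1:ℝ) else 0) := by
      intro j
      rw [Finset.sum_add_distrib]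
      have h2 : (∑ d : Fin (τbar+1), if (e:ℕ) = 0 ∧ (d:ℕ) = τ k j i then P j i else 0) = 0 := by
        apply Finset.sum_eq_zero
        intro d _
        rw [if_neg]
        rintro ⟨h, _⟩; omega
      rw [h2, zero_add]
      by_cases hij : i = j
      · simp only [hij, true_and]
        have h3 : ∀ d : Fin (τbar+1), ((d:ℕ) + 1 = (e:ℕ)) ↔ d = ⟨(e:ℕ) - 1, by omega⟩ := by
          intro d
          rw [Fin.ext_iff]
          simp only
          omega
        simp only [h3]
        rw [Finset.sum_ite_eq' Finset.univ]
        simp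
      · simp [hij]
    rw [Finset.sum_congr rfl (fun j _ => h1 j)]
    simp

lemma Phi_nonneg (hP1 : ∀ j i, 0 ≤ P j i) :
    ∀ t k (a b : V n τbar), 0 ≤ Phi τbar P τ t k a b := by
  intro t
  induction t with
  | zero =>
    intro k a b
    by_cases h : a = b <;> simp [Phi, Matrix.one_apply, h]
  | succ t ih =>
    intro k a b
    show 0 ≤ (M τbar P τ (k + t) * Phi τbar P τ t k) a b
    rw [Matrix.mul_apply]
    apply Finset.sum_nonneg
    intro c _
    exact mul_nonneg (M_nonneg hP1 _ _ _) (ih k c b)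

lemma Phi_col (hP2 : ∀ i, ∑ j, P j i = 1) (hτle : ∀ k j i, τ k j i ≤ τbar) :
    ∀ t k (b : V n τbar), ∑ a, Phi τbar P τ t k a b = 1 := by
  intro t
  induction t with
  | zero =>
    intro k b
    simp [Phi, Matrix.one_apply]
  | succ t ih =>
    intro k b
    show (∑ a, (M τbar P τ (k + t) * Phi τbar P τ t k) a b) = 1
    simp only [Matrix.mul_apply]
    rw [Finset.sum_comm]
    have h : ∀ c : V n τbar, (∑ a, M τbar P τ (k + t) a c * Phi τbar P τ t k c b)
        = Phi τbar P τ t k c b := by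
      intro c
      rw [← Finset.sum_mul, M_col hP2 hτle, one_mul]
    rw [Finset.sum_congr rfl (fun c _ => h c), ih]

lemma Phi_add (t1 t2 k : ℕ) :
    Phi τbar P τ (t1 + t2) k = Phi τbar P τ t1 (k + t2) * Phi τbar P τ t2 k := by
  induction t1 with
  | zero => rw [Nat.zero_add]; show _ = 1 * _; rw [Matrix.one_mul]
  | succ t1 ih =>
    rw [Nat.succ_add]
    show M τbar P τ (k + (t1 + t2)) * Phi τbar P τ (t1 + t2) k = _
    rw [ih]
    show _ = M τbar P τ (k + t2 + t1) * Phi τbar P τ t1 (k + t2) * _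
    have e : k + (t1 + t2) = k + t2 + t1 := by omega
    rw [e, ← Matrix.mul_assoc]

lemma Phi_one (k : ℕ) : Phi τbar P τ 1 k = M τbar P τ k := by
  show M τbar P τ (k + 0) * 1 = M τbar P τ k
  rw [Matrix.mul_one]
  rfl

lemma Phi_comp_le (hP1 : ∀ j i, 0 ≤ P j i) (t1 t2 k : ℕ) (a c b : V n τbar) :
    Phi τbar P τ t1 (k + t2) a c * Phi τbar P τ t2 k c b ≤ Phi τbar P τ (t1 + t2) k a b := by
  rw [Phi_add, Matrix.mul_apply]
  exact Finset.single_le_sum (f := fun c => Phi τbar P τ t1 (k + t2) a c * Phi τbar P τ t2 k c b)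
    (fun c _ => mul_nonneg (Phi_nonneg hP1 _ _ _ _) (Phi_nonneg hP1 _ _ _ _))
    (Finset.mem_univ c)

lemma M_row_action (hτle : ∀ k j i, τ k j i ≤ τbar) (k : ℕ) (a : V n τbar) (f : V n τbar → ℝ) :
    ∑ b, M τbar P τ k a b * f b =
      (∑ i, if (a.2 : ℕ) = τ k a.1 i then P a.1 i * f (i, 0) else 0) +
      (if h : (a.2 : ℕ) + 1 ≤ τbar then f (a.1, ⟨(a.2 : ℕ) + 1, by omega⟩) else 0) := by
  obtain ⟨j, d⟩ := a
  unfold M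
  simp only [add_mul]
  rw [Finset.sum_add_distrib]
  congr 1
  · rw [Fintype.sum_prod_type]
    apply Finset.sum_congr rfl
    intro i _
    have h1 : ∀ e : Fin (τbar+1),
        (if (e:ℕ) = 0 ∧ (d:ℕ) = τ k j i then P j i else 0) * f (i, e)
        = if e = (0 : Fin (τbar+1)) then
            (if (d:ℕ) = τ k j i then P j i * f (i, e) else 0) else 0 := by
      intro e
      by_cases h0 : (e:ℕ) = 0
      · have he : e = (0 : Fin (τbar+1)) := by
          rw [Fin.ext_iff]; simpa using h0
        subst he
        simp only [if_pos rfl, Fin.val_zero, true_and]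
        split <;> simp
      · have he : ¬ e = (0 : Fin (τbar+1)) := by
          rw [Fin.ext_iff]; simpa using h0
        simp [h0, he]
    rw [Finset.sum_congr rfl (fun e _ => h1 e), Finset.sum_ite_eq' Finset.univ]
    simp
  · by_cases h : (d:ℕ) + 1 ≤ τbar
    · rw [dif_pos h]
      have h1 : ∀ b : V n τbar,
          (if b.1 = j ∧ (d:ℕ) + 1 = (b.2:ℕ) then (1:ℝ) else 0) * f b
          = if b = (j, (⟨(d:ℕ)+1, by omega⟩ : Fin (τbar+1))) then f b else 0 := by
        intro b
        by_cases hb : b = (j, (⟨(d:ℕ)+1, by omega⟩ : Fin (τbar+1)))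
        · rw [if_pos hb, if_pos (by rw [hb]; exact ⟨rfl, rfl⟩), one_mul]
        · rw [if_neg hb, if_neg, zero_mul]
          rintro ⟨h1, h2⟩
          exact hb (Prod.ext h1 (Fin.ext h2.symm))
      rw [Finset.sum_congr rfl (fun b _ => h1 b), Finset.sum_ite_eq' Finset.univ,
        if_pos (Finset.mem_univ _)]
    · rw [dif_neg h]
      apply Finset.sum_eq_zero
      intro b _
      rw [if_neg, zero_mul]
      rintro ⟨h1, h2⟩
      have := b.2.isLt
      omega

end basic

section paths

lemma drain (hP1 : ∀ j i, 0 ≤ P j i) :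
    ∀ (e k : ℕ) (i : Fin n) (d d' : Fin (τbar + 1)),
    (d : ℕ) + e = (d' : ℕ) → (1:ℝ) ≤ Phi τbar P τ e k (i, d) (i, d') := by
  intro e
  induction e with
  | zero =>
    intro k i d d' h
    have : d = d' := by rw [Fin.ext_iff]; omega
    subst this
    simp [Phi, Matrix.one_apply]
  | succ e ih =>
    intro k i d d' h
    have hd1 : (d : ℕ) + 1 ≤ τbar := by have := d'.isLt; omega
    set c : V n τbar := (i, ⟨(d:ℕ) + 1, by omega⟩) with hc
    show (1:ℝ) ≤ (M τbar P τ (k + e) * Phi τbar P τ e k) (i, d) (i, d')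
    rw [Matrix.mul_apply]
    have hM : M τbar P τ (k + e) (i, d) c = 1 := by
      unfold M
      rw [if_neg, if_pos ⟨rfl, rfl⟩, zero_add]
      rintro ⟨h0, _⟩
      simp only [hc] at h0
      omega
    have hterm : (1:ℝ) ≤ M τbar P τ (k + e) (i, d) c * Phi τbar P τ e k c (i, d') := by
      rw [hM, one_mul]
      exact ih k i _ d' (by simp [hc]; omega)
    refine le_trans hterm (Finset.single_le_sum
      (f := fun b => M τbar P τ (k + e) (i, d) b * Phi τbar P τ e k b (i, d')) ?_
      (Finset.mem_univ c))
    intro b _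
    exact mul_nonneg (M_nonneg hP1 _ _ _) (Phi_nonneg hP1 _ _ _ _)

lemma pad (hP1 : ∀ j i, 0 ≤ P j i) (hτself : ∀ k j, τ k j j = 0)
    (pm : ℝ) (hpm0 : 0 < pm) (hpd : ∀ j, pm ≤ P j j) :
    ∀ (r k : ℕ) (j : Fin n), pm ^ r ≤ Phi τbar P τ r k (j, 0) (j, 0) := by
  intro r
  induction r with
  | zero =>
    intro k j
    simp [Phi, Matrix.one_apply]
  | succ r ih =>
    intro k j
    show pm ^ (r + 1) ≤ (M τbar P τ (k + r) * Phi τbar P τ r k) (j, 0) (j, 0)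
    rw [Matrix.mul_apply]
    have hM : pm ≤ M τbar P τ (k + r) (j, 0) (j, 0) := by
      unfold M
      rw [if_pos ⟨rfl, by rw [hτself]; simp⟩, if_neg (by simp), add_zero]
      exact hpd j
    have hterm : pm ^ (r+1) ≤ M τbar P τ (k + r) (j,0) (j,0) * Phi τbar P τ r k (j,0) (j,0) := by
      rw [pow_succ, mul_comm]
      exact mul_le_mul hM (ih k j) (pow_nonneg hpm0.le r)
        (le_trans hpm0.le hM)
    refine le_trans hterm (Finset.single_le_sum
      (f := fun b => M τbar P τ (k + r) (j, 0) b * Phi τbar P τ r k b (j, 0)) ?_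
      (Finset.mem_univ ((j, 0) : V n τbar)))
    intro b _
    exact mul_nonneg (M_nonneg hP1 _ _ _) (Phi_nonneg hP1 _ _ _ _)

lemma Pow_nonneg (hP1 : ∀ j i, 0 ≤ P j i) : ∀ (m : ℕ) (j i : Fin n), 0 ≤ (P ^ m) j i := by
  intro m
  induction m with
  | zero => intro j i; rw [pow_zero]; by_cases h : j = i <;> simp [Matrix.one_apply, h]
  | succ m ih =>
    intro j i
    rw [pow_succ', Matrix.mul_apply]
    exact Finset.sum_nonneg fun l _ => mul_nonneg (hP1 j l) (ih l i)

lemma pathex (hP1 : ∀ j i, 0 ≤ P j i) (hτle : ∀ k j i, τ k j i ≤ τbar)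
    (hτself : ∀ k j, τ k j j = 0)
    (pm : ℝ) (hpm0 : 0 < pm) (hpm1 : pm ≤ 1) (hpm : ∀ j i, 0 < P j i → pm ≤ P j i)
    (hdiag : ∀ j, 0 < P j j) :
    ∀ (m : ℕ) (j i : Fin n), 0 < (P ^ m) j i →
    ∀ k s, m * (τbar + 1) ≤ s → pm ^ s ≤ Phi τbar P τ s k (j, 0) (i, 0) := by
  have hpd : ∀ j, pm ≤ P j j := fun j => hpm j j (hdiag j)
  intro m
  induction m with
  | zero =>
    intro j i hpos k s _
    rw [pow_zero] at hpos
    have hji : j = i := by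
      by_contra h
      rw [Matrix.one_apply_ne h] at hpos
      exact lt_irrefl 0 hpos
    subst hji
    exact pad hP1 hτself pm hpm0 hpd s k j
  | succ m ih =>
    intro j i hpos k s hs
    rw [pow_succ', Matrix.mul_apply] at hpos
    have hl : ∃ l, 0 < P j l * (P ^ m) l i := by
      by_contra hc
      push_neg at hc
      have : (∑ l, P j l * (P ^ m) l i) ≤ 0 := Finset.sum_nonpos fun l _ => hc l
      linarith
    obtain ⟨l, hl⟩ := hl
    have hjl : 0 < P j l := by
      rcases (hP1 j l).lt_or_eq with h | h
      · exact h
      · rw [← h, zero_mul] at hl; exact absurd hl (lt_irrefl 0)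
    have hli : 0 < (P ^ m) l i := by
      rcases (Pow_nonneg hP1 m l i).lt_or_eq with h | h
      · exact h
      · rw [← h, mul_zero] at hl; exact absurd hl (lt_irrefl 0)
    set s2 := m * (τbar + 1) with hs2
    have hsge : s2 + (τbar + 1) ≤ s := by
      rw [hs2]
      calc m * (τbar + 1) + (τbar + 1) = (m + 1) * (τbar + 1) := by ring
        _ ≤ s := hs
    set t' := τ (k + s2) j l with ht'
    have ht'le : t' ≤ τbar := hτle _ _ _
    set r := s - s2 - (t' + 1) with hr
    have hsum : r + (t' + 1) + s2 = s := by omega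
    -- hop : pm ≤ Phi (t'+1) (k+s2) (j,0) (l,0)
    have hopM : pm ≤ M τbar P τ (k + s2) (j, ⟨t', by omega⟩) (l, 0) := by
      unfold M
      rw [if_pos ⟨rfl, rfl⟩, if_neg (by simp), add_zero]
      exact hpm j l hjl
    have hop : pm ≤ Phi τbar P τ (t' + 1) (k + s2) (j, 0) (l, 0) := by
      have hdr : (1:ℝ) ≤ Phi τbar P τ t' (k + s2 + 1) (j, 0) (j, ⟨t', by omega⟩) :=
        drain hP1 t' (k + s2 + 1) j 0 ⟨t', by omega⟩ (by simp)
      have h1 : pm ≤ Phi τbar P τ t' (k + s2 + 1) (j, 0) (j, ⟨t', by omega⟩) *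
          Phi τbar P τ 1 (k + s2) (j, ⟨t', by omega⟩) (l, 0) := by
        rw [Phi_one]
        calc pm = 1 * pm := (one_mul pm).symm
          _ ≤ _ := mul_le_mul hdr hopM hpm0.le (le_trans zero_le_one hdr)
      exact le_trans h1 (Phi_comp_le hP1 t' 1 (k + s2) _ _ _)
    -- path to l
    have hC : pm ^ s2 ≤ Phi τbar P τ s2 k (l, 0) (i, 0) := ih l i hli k s2 le_rfl
    -- pad
    have hA : pm ^ r ≤ Phi τbar P τ r (k + s2 + (t' + 1)) (j, 0) (j, 0) :=
      pad hP1 hτself pm hpm0 hpd r _ j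
    have step2 : Phi τbar P τ r (k + s2 + (t' + 1)) (j, 0) (j, 0) *
        Phi τbar P τ (t' + 1) (k + s2) (j, 0) (l, 0) ≤
        Phi τbar P τ (r + (t' + 1)) (k + s2) (j, 0) (l, 0) :=
      Phi_comp_le hP1 r (t' + 1) (k + s2) _ _ _
    have step1 : Phi τbar P τ (r + (t' + 1)) (k + s2) (j, 0) (l, 0) *
        Phi τbar P τ s2 k (l, 0) (i, 0) ≤
        Phi τbar P τ (r + (t' + 1) + s2) k (j, 0) (i, 0) :=
      Phi_comp_le hP1 (r + (t' + 1)) s2 k _ _ _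
    have hmono : pm ^ s ≤ pm ^ (r + 1 + s2) :=
      pow_le_pow_of_le_one hpm0.le hpm1 (by omega)
    have hrw : pm ^ (r + 1 + s2) = pm ^ r * pm * pm ^ s2 := by
      rw [pow_add, pow_add, pow_one]
    have h1 : pm ^ r * pm ≤ Phi τbar P τ r (k + s2 + (t' + 1)) (j, 0) (j, 0) *
        Phi τbar P τ (t' + 1) (k + s2) (j, 0) (l, 0) :=
      mul_le_mul hA hop hpm0.le (le_trans (pow_nonneg hpm0.le r) hA)
    have h2 : pm ^ r * pm * pm ^ s2 ≤ Phi τbar P τ (r + (t' + 1)) (k + s2) (j, 0) (l, 0) *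
        Phi τbar P τ s2 k (l, 0) (i, 0) := by
      calc pm ^ r * pm * pm ^ s2
          ≤ (Phi τbar P τ r (k + s2 + (t' + 1)) (j, 0) (j, 0) *
            Phi τbar P τ (t' + 1) (k + s2) (j, 0) (l, 0)) * pm ^ s2 :=
            mul_le_mul_of_nonneg_right h1 (pow_nonneg hpm0.le s2)
        _ ≤ Phi τbar P τ (r + (t' + 1)) (k + s2) (j, 0) (l, 0) * pm ^ s2 :=
            mul_le_mul_of_nonneg_right step2 (pow_nonneg hpm0.le s2)
        _ ≤ _ := mul_le_mul_of_nonneg_left hC (Phi_nonneg hP1 _ _ _ _)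
    have : pm ^ s ≤ Phi τbar P τ (r + (t' + 1) + s2) k (j, 0) (i, 0) := by
      calc pm ^ s ≤ pm ^ (r + 1 + s2) := hmono
        _ = pm ^ r * pm * pm ^ s2 := hrw
        _ ≤ _ := le_trans h2 step1
    rwa [hsum] at this

lemma rowpos (hP1 : ∀ j i, 0 ≤ P j i) (hτle : ∀ k j i, τ k j i ≤ τbar)
    (hτself : ∀ k j, τ k j j = 0)
    (pm : ℝ) (hpm0 : 0 < pm) (hpm1 : pm ≤ 1) (hpm : ∀ j i, 0 < P j i → pm ≤ P j i)
    (hdiag : ∀ j, 0 < P j j)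
    (Mx L : ℕ) (hL : L = τbar + Mx * (τbar + 1))
    (hM : ∀ j i : Fin n, ∃ m ≤ Mx, 0 < (P ^ m) j i) :
    ∀ k (j : Fin n) (b : V n τbar), pm ^ L ≤ Phi τbar P τ L k (j, 0) b := by
  intro k j b
  obtain ⟨i, d⟩ := b
  obtain ⟨m, hmMx, hmpos⟩ := hM j i
  have hd : (d : ℕ) ≤ τbar := by omega
  have hmul : m * (τbar + 1) ≤ Mx * (τbar + 1) := Nat.mul_le_mul_right _ hmMx
  have h2 : pm ^ (L - (d:ℕ)) ≤ Phi τbar P τ (L - (d:ℕ)) (k + (d:ℕ)) (j, 0) (i, 0) :=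
    pathex hP1 hτle hτself pm hpm0 hpm1 hpm hdiag m j i hmpos (k + (d:ℕ)) (L - (d:ℕ))
      (by omega)
  have h1 : (1:ℝ) ≤ Phi τbar P τ (d:ℕ) k (i, 0) (i, d) :=
    drain hP1 (d:ℕ) k i 0 d (by simp)
  have hcomp : Phi τbar P τ (L - (d:ℕ)) (k + (d:ℕ)) (j, 0) (i, 0) *
      Phi τbar P τ (d:ℕ) k (i, 0) (i, d) ≤
      Phi τbar P τ (L - (d:ℕ) + (d:ℕ)) k (j, 0) (i, d) :=
    Phi_comp_le hP1 _ _ k _ _ _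
  have hLd : L - (d:ℕ) + (d:ℕ) = L := by omega
  rw [hLd] at hcomp
  calc pm ^ L ≤ pm ^ (L - (d:ℕ)) := pow_le_pow_of_le_one hpm0.le hpm1 (by omega)
    _ ≤ Phi τbar P τ (L - (d:ℕ)) (k + (d:ℕ)) (j, 0) (i, 0) * 1 := by
        rw [mul_one]; exact h2
    _ ≤ Phi τbar P τ (L - (d:ℕ)) (k + (d:ℕ)) (j, 0) (i, 0) *
        Phi τbar P τ (d:ℕ) k (i, 0) (i, d) :=
        mul_le_mul_of_nonneg_left h1 (Phi_nonneg hP1 _ _ _ _)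
    _ ≤ _ := hcomp

end paths

/-- ℓ¹ contraction for column-stochastic matrices with uniform row mass `w` -/
lemma l1_contract {W : Type*} [Fintype W] (A : Matrix W W ℝ) (hA : ∀ a b, 0 ≤ A a b)
    (hcol : ∀ b, ∑ a, A a b = 1) (w : W → ℝ) (hw0 : ∀ a, 0 ≤ w a)
    (hw : ∀ a b, w a ≤ A a b) (u : W → ℝ) (hu : ∑ c, u c = 0) :
    ∑ a, |∑ c, A a c * u c| ≤ (1 - ∑ a, w a) * ∑ c, |u c| := by
  have key : ∀ a, |∑ c, A a c * u c| ≤ ∑ c, (A a c - w a) * |u c| := by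
    intro a
    have h0 : ∑ c, (A a c - w a) * u c = ∑ c, A a c * u c := by
      simp only [sub_mul]
      rw [Finset.sum_sub_distrib, ← Finset.mul_sum, hu, mul_zero, sub_zero]
    rw [← h0]
    calc |∑ c, (A a c - w a) * u c| ≤ ∑ c, |(A a c - w a) * u c| :=
          Finset.abs_sum_le_sum_abs _ _
      _ = ∑ c, (A a c - w a) * |u c| := by
          apply Finset.sum_congr rfl; intro c _
          rw [abs_mul, abs_of_nonneg (by linarith [hw a c])]
  calc ∑ a, |∑ c, A a c * u c| ≤ ∑ a, ∑ c, (A a c - w a) * |u c| :=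
        Finset.sum_le_sum fun a _ => key a
    _ = ∑ c, (∑ a, (A a c - w a)) * |u c| := by
        rw [Finset.sum_comm]
        apply Finset.sum_congr rfl; intro c _
        rw [Finset.sum_mul]
    _ = ∑ c, (1 - ∑ a, w a) * |u c| := by
        apply Finset.sum_congr rfl; intro c _
        rw [Finset.sum_sub_distrib, hcol]
    _ = (1 - ∑ a, w a) * ∑ c, |u c| := by rw [← Finset.mul_sum]

section state

/-- in-flight mass scheduled to be added to node `j`, `d` steps into the future -/
def B (P : Matrix (Fin n) (Fin n) ℝ) (τ : ℕ → Fin n → Fin n → ℕ)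
    (x : ℕ → Fin n → ℝ) (k : ℕ) (j : Fin n) (d : ℕ) : ℝ :=
  ∑ i, ∑ s ∈ Finset.range k, if s + τ s j i + 1 = k + d then P j i * x s i else 0

def Xof (τbar : ℕ) (P : Matrix (Fin n) (Fin n) ℝ) (τ : ℕ → Fin n → Fin n → ℕ)
    (x : ℕ → Fin n → ℝ) (k : ℕ) (a : V n τbar) : ℝ :=
  if (a.2 : ℕ) = 0 then x k a.1 else B P τ x k a.1 (a.2 : ℕ)

variable {x : ℕ → Fin n → ℝ}

lemma B_step (k : ℕ) (j : Fin n) (d : ℕ) :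
    B P τ x (k+1) j d =
      (∑ i, if τ k j i = d then P j i * x k i else 0) + B P τ x k j (d+1) := by
  unfold B
  rw [← Finset.sum_add_distrib]
  apply Finset.sum_congr rfl
  intro i _
  rw [Finset.sum_range_succ, add_comm]
  congr 1
  · exact if_congr (by omega) rfl rfl
  · exact Finset.sum_congr rfl fun s _ => if_congr (by omega) rfl rfl

lemma B_high (hτle : ∀ k j i, τ k j i ≤ τbar) (k : ℕ) (j : Fin n) (d : ℕ) (hd : τbar < d) :
    B P τ x k j d = 0 := by
  unfold B
  apply Finset.sum_eq_zero; intro i _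
  apply Finset.sum_eq_zero; intro s hs
  rw [Finset.mem_range] at hs
  rw [if_neg]
  have := hτle s j i
  omega

lemma hx_B (hx : DelayedIter P τ x) (k : ℕ) (j : Fin n) :
    x (k+1) j = B P τ x (k+1) j 0 := by
  rw [hx k j]
  unfold B
  apply Finset.sum_congr rfl; intro i _
  apply Finset.sum_congr rfl; intro s _
  exact if_congr (by omega) rfl rfl

lemma Xof_rec (hτle : ∀ k j i, τ k j i ≤ τbar) (hx : DelayedIter P τ x) (k : ℕ) (a : V n τbar) :
    Xof τbar P τ x (k+1) a = ∑ b, M τbar P τ k a b * Xof τbar P τ x k b := by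
  obtain ⟨j, d⟩ := a
  rw [M_row_action hτle]
  have hL : Xof τbar P τ x (k+1) (j, d) = B P τ x (k+1) j (d:ℕ) := by
    unfold Xof
    by_cases h : (d:ℕ) = 0
    · rw [if_pos h, hx_B hx, h]
    · rw [if_neg h]
  rw [hL, B_step k j (d:ℕ)]
  congr 1
  · apply Finset.sum_congr rfl
    intro i _
    exact if_congr (eq_comm) rfl rfl
  · by_cases h2 : (d:ℕ) + 1 ≤ τbar
    · rw [dif_pos h2]
      unfold Xof
      rw [if_neg (by simp)]
    · rw [dif_neg h2, B_high hτle]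
      omega

end state

lemma action {X : ℕ → V n τbar → ℝ}
    (hX : ∀ k a, X (k+1) a = ∑ b, M τbar P τ k a b * X k b) :
    ∀ (t k0 : ℕ) (a : V n τbar), X (k0 + t) a = ∑ b, Phi τbar P τ t k0 a b * X k0 b := by
  intro t
  induction t with
  | zero =>
    intro k0 a
    simp [Phi, Matrix.one_apply, ite_mul, zero_mul, one_mul, Finset.sum_ite_eq]
  | succ t ih =>
    intro k0 a
    show X ((k0 + t) + 1) a = _
    rw [hX (k0 + t) a]
    calc ∑ b, M τbar P τ (k0 + t) a b * X (k0 + t) b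
        = ∑ b, M τbar P τ (k0 + t) a b * ∑ c, Phi τbar P τ t k0 b c * X k0 c :=
          Finset.sum_congr rfl fun b _ => by rw [ih k0 b]
      _ = ∑ c, (∑ b, M τbar P τ (k0 + t) a b * Phi τbar P τ t k0 b c) * X k0 c := by
          simp only [Finset.mul_sum, Finset.sum_mul]
          rw [Finset.sum_comm]
          apply Finset.sum_congr rfl; intro c _
          apply Finset.sum_congr rfl; intro b _
          ring
      _ = ∑ c, Phi τbar P τ (t+1) k0 a c * X k0 c := by
          apply Finset.sum_congr rfl; intro c _
          congr 1

lemma mass (hP2 : ∀ i, ∑ j, P j i = 1) (hτle : ∀ k j i, τ k j i ≤ τbar)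
    {X : ℕ → V n τbar → ℝ}
    (hX : ∀ k a, X (k+1) a = ∑ b, M τbar P τ k a b * X k b) :
    ∀ t, ∑ a, X t a = ∑ a, X 0 a := by
  intro t
  induction t with
  | zero => rfl
  | succ t ih =>
    rw [← ih]
    rw [Finset.sum_congr rfl fun a (_ : a ∈ Finset.univ) => hX t a, Finset.sum_comm]
    apply Finset.sum_congr rfl
    intro b _
    rw [← Finset.sum_mul, M_col hP2 hτle, one_mul]

lemma wsum (δ : ℝ) : (∑ a : V n τbar, (if (a.2:ℕ) = 0 then δ else 0)) = (n:ℝ) * δ := by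
  rw [Fintype.sum_prod_type]
  have h1 : ∀ j : Fin n, (∑ d : Fin (τbar+1), if (d:ℕ) = 0 then δ else 0) = δ := by
    intro j
    have h2 : ∀ d : Fin (τbar+1), ((d:ℕ) = 0) ↔ d = ⟨0, by omega⟩ :=
      fun d => fin_eq_iff 0 (by omega) d
    simp only [h2]
    rw [Finset.sum_ite_eq' Finset.univ]
    simp
  rw [Finset.sum_congr rfl fun j _ => h1 j]
  simp [Finset.sum_const, Finset.card_univ, nsmul_eq_mul]

lemma spread (hP1 : ∀ j i, 0 ≤ P j i) (hP2 : ∀ i, ∑ j, P j i = 1)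
    (hτle : ∀ k j i, τ k j i ≤ τbar)
    (L : ℕ) (hL0 : 0 < L) (δ : ℝ) (hδ0 : 0 < δ) (hδ1 : (n:ℝ) * δ ≤ 1)
    (hrow : ∀ k (j : Fin n) (b : V n τbar), δ ≤ Phi τbar P τ L k (j, 0) b) :
    ∀ k (b b' : V n τbar),
      ∑ a, |Phi τbar P τ k 0 a b - Phi τbar P τ k 0 a b'| ≤
        2 * (1 - (n:ℝ) * δ) ^ (k / L) := by
  have tri : ∀ x y : ℝ, |x - y| ≤ |x| + |y| := fun x y => by
    rw [sub_eq_add_neg]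
    exact (abs_add_le x (-y)).trans_eq (by rw [abs_neg])
  intro k
  induction k using Nat.strong_induction_on with
  | _ k ih =>
    intro b b'
    by_cases hk : k < L
    · rw [Nat.div_eq_of_lt hk, pow_zero, mul_one]
      calc ∑ a, |Phi τbar P τ k 0 a b - Phi τbar P τ k 0 a b'|
          ≤ ∑ a, (Phi τbar P τ k 0 a b + Phi τbar P τ k 0 a b') := by
            apply Finset.sum_le_sum
            intro a _
            refine (tri _ _).trans_eq ?_
            rw [abs_of_nonneg (Phi_nonneg hP1 _ _ _ _), abs_of_nonneg (Phi_nonneg hP1 _ _ _ _)]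
        _ = 2 := by
            rw [Finset.sum_add_distrib, Phi_col hP2 hτle, Phi_col hP2 hτle]
            norm_num
    · push_neg at hk
      have hk' : k - L < k := by omega
      have hrec : k = L + (k - L) := by omega
      set A := Phi τbar P τ L (0 + (k - L)) with hA
      set u := fun c => Phi τbar P τ (k-L) 0 c b - Phi τbar P τ (k-L) 0 c b' with hu
      have e1 : ∀ (a : V n τbar) (bb : V n τbar),
          Phi τbar P τ k 0 a bb = ∑ c, A a c * Phi τbar P τ (k - L) 0 c bb := by
        intro a bb
        conv_lhs => rw [hrec]
        rw [Phi_add, Matrix.mul_apply]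
      have hsplit : ∀ a : V n τbar,
          Phi τbar P τ k 0 a b - Phi τbar P τ k 0 a b' = ∑ c, A a c * u c := by
        intro a
        rw [e1 a b, e1 a b', ← Finset.sum_sub_distrib]
        exact Finset.sum_congr rfl fun c _ => (mul_sub _ _ _).symm
      have hcontr := l1_contract A (fun a c => Phi_nonneg hP1 _ _ _ _)
          (fun c => Phi_col hP2 hτle _ _ _)
          (fun a => if (a.2:ℕ) = 0 then δ else 0)
          (fun a => by
            show (0:ℝ) ≤ if (a.2:ℕ) = 0 then δ else 0
            split
            · exact hδ0.le
            · exact le_refl 0)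
          (fun a c => by
            show (if (a.2:ℕ) = 0 then δ else 0) ≤ A a c
            split
            · rename_i h
              have ha : a = (a.1, (0 : Fin (τbar+1))) :=
                Prod.ext rfl (by rw [Fin.ext_iff]; simpa using h)
              rw [ha]
              exact hrow _ a.1 c
            · exact Phi_nonneg hP1 _ _ _ _)
          u
          (by rw [hu]
              simp only
              rw [Finset.sum_sub_distrib, Phi_col hP2 hτle, Phi_col hP2 hτle, sub_self])
      rw [wsum] at hcontr
      have h3 : (k - L) / L + 1 = k / L := by
        rw [← Nat.add_div_right (k - L) hL0]
        congr 1
        omega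
      calc ∑ a, |Phi τbar P τ k 0 a b - Phi τbar P τ k 0 a b'|
          = ∑ a, |∑ c, A a c * u c| :=
            Finset.sum_congr rfl fun a _ => by rw [hsplit a]
        _ ≤ (1 - (n:ℝ) * δ) * ∑ c, |u c| := hcontr
        _ ≤ (1 - (n:ℝ) * δ) * (2 * (1 - (n:ℝ) * δ) ^ ((k - L) / L)) :=
            mul_le_mul_of_nonneg_left (ih (k - L) hk' b b') (by linarith)
        _ = 2 * (1 - (n:ℝ) * δ) ^ ((k - L) / L + 1) := by rw [pow_succ]; ring
        _ = 2 * (1 - (n:ℝ) * δ) ^ (k / L) := by rw [h3]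


end PushSum

theorem statement0 (n : ℕ) (hn : 2 ≤ n)
    (P : Matrix (Fin n) (Fin n) ℝ) (hP : ColStoch P)
    (hdiag : ∀ j, 0 < P j j)
    (hirr : ∀ j i : Fin n, ∃ m : ℕ, 1 ≤ m ∧ 0 < (P ^ m) j i)
    (τbar : ℕ) (τ : ℕ → Fin n → Fin n → ℕ)
    (hτle : ∀ k j i, τ k j i ≤ τbar)
    (hτself : ∀ k j, τ k j j = 0)
    (y z : ℕ → Fin n → ℝ) (y0 : Fin n → ℝ)
    (hy0 : y 0 = y0) (hz0 : ∀ j, z 0 j = 1)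
    (hy : DelayedIter P τ y) (hz : DelayedIter P τ z) :
    (∀ k j, 0 < z k j) ∧
      ∀ j, Tendsto (fun k => y k j / z k j) atTop (nhds ((∑ l, y0 l) / (n : ℝ))) := by
  obtain ⟨hP1, hP2⟩ := hP
  haveI : NeZero n := ⟨by omega⟩
  -- Part 1 : positivity of z
  have hzpos : ∀ k j, 0 < z k j := by
    intro k
    induction k using Nat.strong_induction_on with
    | _ k ih =>
      cases k with
      | zero => intro j; rw [hz0 j]; exact one_pos
      | succ k =>
        intro j
        rw [hz k j]
        have hf : ∀ i, (0:ℝ) ≤ ∑ s ∈ Finset.range (k+1),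
            if s + τ s j i = k then P j i * z s i else 0 := by
          intro i
          apply Finset.sum_nonneg
          intro s hs
          rw [Finset.mem_range] at hs
          split
          · exact mul_nonneg (hP1 j i) (ih s (by omega) i).le
          · exact le_refl 0
        have hj : (0:ℝ) < ∑ s ∈ Finset.range (k+1),
            if s + τ s j j = k then P j j * z s j else 0 := by
          have hterm : (0:ℝ) < (if k + τ k j j = k then P j j * z k j else 0) := by
            rw [hτself k j, Nat.add_zero, if_pos rfl]
            exact mul_pos (hdiag j) (ih k (by omega) j)
          refine lt_of_lt_of_le hterm (Finset.single_le_sum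
            (f := fun s => if s + τ s j j = k then P j j * z s j else 0) ?_
            (Finset.mem_range.2 (by omega)))
          intro s hs
          rw [Finset.mem_range] at hs
          show 0 ≤ (if s + τ s j j = k then P j j * z s j else 0)
          split
          · exact mul_nonneg (hP1 j j) (ih s (by omega) j).le
          · exact le_refl 0
        exact lt_of_lt_of_le hj (Finset.single_le_sum
          (f := fun i => ∑ s ∈ Finset.range (k+1),
            if s + τ s j i = k then P j i * z s i else 0)
          (fun i _ => hf i) (Finset.mem_univ j))
  refine ⟨hzpos, ?_⟩
  -- entries of P are at most 1
  have hent : ∀ j i, P j i ≤ 1 := by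
    intro j i
    rw [← hP2 i]
    exact Finset.single_le_sum (fun l _ => hP1 l i) (Finset.mem_univ j)
  -- minimal positive entry
  set S : Finset (Fin n × Fin n) := Finset.univ.filter (fun p => 0 < P p.1 p.2) with hSdef
  have hSne : S.Nonempty := ⟨(0, 0), by simp [hSdef, hdiag 0]⟩
  set pm := S.inf' hSne (fun p => P p.1 p.2) with hpmdef
  have hpm0 : 0 < pm := by
    rw [hpmdef, Finset.lt_inf'_iff]
    intro p hp
    rw [hSdef, Finset.mem_filter] at hp
    exact hp.2
  have hpm : ∀ j i, 0 < P j i → pm ≤ P j i := by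
    intro j i h
    have hmem : (j, i) ∈ S := by rw [hSdef]; simp [h]
    exact Finset.inf'_le _ hmem
  have hpm1 : pm ≤ 1 := le_trans (hpm 0 0 (hdiag 0)) (hent 0 0)
  -- uniform bound on irreducibility exponents
  choose mfun hm1 hmpos using hirr
  set Mx := Finset.univ.sup (fun p : Fin n × Fin n => mfun p.1 p.2) with hMxdef
  have hM : ∀ j i : Fin n, ∃ m ≤ Mx, 0 < (P ^ m) j i := fun j i =>
    ⟨mfun j i, Finset.le_sup (f := fun p : Fin n × Fin n => mfun p.1 p.2)
      (Finset.mem_univ (j, i)), hmpos j i⟩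
  have hMx1 : 1 ≤ Mx := le_trans (hm1 0 0)
    (Finset.le_sup (f := fun p : Fin n × Fin n => mfun p.1 p.2)
      (Finset.mem_univ ((0 : Fin n), (0 : Fin n))))
  set L := τbar + Mx * (τbar + 1) with hLdef
  have hL0 : 0 < L := by
    have : τbar + 1 ≤ Mx * (τbar + 1) := Nat.le_mul_of_pos_left _ hMx1
    omega
  set δ := pm ^ L with hδdef
  have hδ0 : 0 < δ := pow_pos hpm0 L
  have hrow : ∀ k (j : Fin n) (b : PushSum.V n τbar),
      δ ≤ PushSum.Phi τbar P τ L k (j, 0) b :=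
    PushSum.rowpos hP1 hτle hτself pm hpm0 hpm1 hpm hdiag Mx L hLdef hM
  have hδ1 : (n:ℝ) * δ ≤ 1 := by
    have h1 : (∑ a : PushSum.V n τbar, (if (a.2:ℕ) = 0 then δ else 0)) ≤
        ∑ a, PushSum.Phi τbar P τ L 0 a ((0 : Fin n), (0 : Fin (τbar+1))) := by
      apply Finset.sum_le_sum
      intro a _
      split
      · rename_i h
        have ha : a = (a.1, (0 : Fin (τbar+1))) :=
          Prod.ext rfl (by rw [Fin.ext_iff]; simpa using h)
        rw [ha]
        exact hrow 0 a.1 _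
      · exact PushSum.Phi_nonneg hP1 _ _ _ _
    rw [PushSum.wsum] at h1
    rwa [PushSum.Phi_col hP2 hτle] at h1
  set lam := 1 - (n:ℝ) * δ with hlamdef
  have hnR : (0:ℝ) < n := by
    have : (0:ℕ) < n := by omega
    exact_mod_cast this
  have hlam0 : 0 ≤ lam := by rw [hlamdef]; linarith
  have hlam1 : lam < 1 := by
    have : 0 < (n:ℝ) * δ := mul_pos hnR hδ0
    rw [hlamdef]; linarith
  have hsp := PushSum.spread (τ := τ) hP1 hP2 hτle L hL0 δ hδ0 hδ1 hrow
  -- state representations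
  set Xy := PushSum.Xof τbar P τ y with hXydef
  set Xz := PushSum.Xof τbar P τ z with hXzdef
  have hXy : ∀ k a, Xy (k+1) a = ∑ b, PushSum.M τbar P τ k a b * Xy k b :=
    fun k a => PushSum.Xof_rec hτle hy k a
  have hXz : ∀ k a, Xz (k+1) a = ∑ b, PushSum.M τbar P τ k a b * Xz k b :=
    fun k a => PushSum.Xof_rec hτle hz k a
  have hXy0 : ∀ i : Fin n, Xy 0 ((i, 0) : PushSum.V n τbar) = y0 i := by
    intro i
    rw [hXydef]
    unfold PushSum.Xof
    rw [if_pos (by simp), hy0]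
  have hXz0 : ∀ i : Fin n, Xz 0 ((i, 0) : PushSum.V n τbar) = 1 := by
    intro i
    rw [hXzdef]
    unfold PushSum.Xof
    rw [if_pos (by simp), hz0]
  have hXybuf : ∀ (i : Fin n) (e : Fin (τbar+1)), e ≠ 0 → Xy 0 (i, e) = 0 := by
    intro i e he
    rw [hXydef]
    unfold PushSum.Xof
    rw [if_neg (fun h => he (by rw [Fin.ext_iff]; simpa using h))]
    simp [PushSum.B]
  have hXzbuf : ∀ (i : Fin n) (e : Fin (τbar+1)), e ≠ 0 → Xz 0 (i, e) = 0 := by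
    intro i e he
    rw [hXzdef]
    unfold PushSum.Xof
    rw [if_neg (fun h => he (by rw [Fin.ext_iff]; simpa using h))]
    simp [PushSum.B]
  have hyrep : ∀ k (j : Fin n),
      y k j = ∑ i, PushSum.Phi τbar P τ k 0 ((j, 0) : PushSum.V n τbar) (i, 0) * y0 i := by
    intro k j
    have h1 : y k j = Xy k (j, 0) := by simp [hXydef, PushSum.Xof]
    have h2 := PushSum.action hXy k 0 ((j, 0) : PushSum.V n τbar)
    rw [Nat.zero_add] at h2
    rw [h1, h2, Fintype.sum_prod_type]
    apply Finset.sum_congr rfl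
    intro i _
    rw [Finset.sum_eq_single (0 : Fin (τbar+1))]
    · rw [hXy0 i]
    · intro e _ he
      rw [hXybuf i e he, mul_zero]
    · intro h; exact absurd (Finset.mem_univ _) h
  have hzrep : ∀ k (j : Fin n),
      z k j = ∑ i, PushSum.Phi τbar P τ k 0 ((j, 0) : PushSum.V n τbar) (i, 0) := by
    intro k j
    have h1 : z k j = Xz k (j, 0) := by simp [hXzdef, PushSum.Xof]
    have h2 := PushSum.action hXz k 0 ((j, 0) : PushSum.V n τbar)
    rw [Nat.zero_add] at h2
    rw [h1, h2, Fintype.sum_prod_type]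
    apply Finset.sum_congr rfl
    intro i _
    rw [Finset.sum_eq_single (0 : Fin (τbar+1))]
    · rw [hXz0 i, mul_one]
    · intro e _ he
      rw [hXzbuf i e he, mul_zero]
    · intro h; exact absurd (Finset.mem_univ _) h
  -- lower bound on z
  have hXznn : ∀ m (b : PushSum.V n τbar), 0 ≤ Xz m b := by
    intro m b
    rw [hXzdef]
    unfold PushSum.Xof
    split
    · exact (hzpos m b.1).le
    · unfold PushSum.B
      apply Finset.sum_nonneg; intro i _
      apply Finset.sum_nonneg; intro s _
      split
      · exact mul_nonneg (hP1 b.1 i) (hzpos s i).le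
      · exact le_refl 0
  have hXz0sum : ∑ b : PushSum.V n τbar, Xz 0 b = (n:ℝ) := by
    have h0 : ∀ b : PushSum.V n τbar, Xz 0 b = (if (b.2:ℕ) = 0 then (1:ℝ) else 0) := by
      intro b
      by_cases h : (b.2:ℕ) = 0
      · rw [if_pos h]
        have hb : b = (b.1, (0 : Fin (τbar+1))) :=
          Prod.ext rfl (by rw [Fin.ext_iff]; simpa using h)
        rw [hb]; exact hXz0 b.1
      · rw [if_neg h]
        have hb : b = (b.1, b.2) := rfl
        rw [hb]
        exact hXzbuf b.1 b.2 (fun hh => h (by rw [hh]; simp))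
    rw [Finset.sum_congr rfl fun b _ => h0 b, PushSum.wsum, mul_one]
  have hmass : ∀ m, ∑ b : PushSum.V n τbar, Xz m b = (n:ℝ) := fun m => by
    rw [PushSum.mass hP2 hτle hXz m, hXz0sum]
  have hzlb : ∀ k, L ≤ k → ∀ j, (n:ℝ) * δ ≤ z k j := by
    intro k hk j
    have h1 : z k j = Xz k (j, 0) := by simp [hXzdef, PushSum.Xof]
    have h2 := PushSum.action hXz L (k - L) ((j, 0) : PushSum.V n τbar)
    have h3 : (k - L) + L = k := by omega
    rw [h3] at h2
    rw [h1, h2]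
    calc (n:ℝ) * δ = δ * (n:ℝ) := mul_comm _ _
      _ = δ * ∑ b : PushSum.V n τbar, Xz (k-L) b := by rw [hmass]
      _ = ∑ b : PushSum.V n τbar, δ * Xz (k-L) b := Finset.mul_sum _ _ _
      _ ≤ ∑ b, PushSum.Phi τbar P τ L (k-L) (j,0) b * Xz (k-L) b :=
          Finset.sum_le_sum fun b _ =>
            mul_le_mul_of_nonneg_right (hrow (k-L) j b) (hXznn _ b)
  -- the convergence
  intro j
  set μ := (∑ l, y0 l) / (n:ℝ) with hμdef
  have hsum0 : ∑ i, (y0 i - μ) = 0 := by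
    rw [Finset.sum_sub_distrib, Finset.sum_const, Finset.card_univ, Fintype.card_fin, hμdef]
    rw [nsmul_eq_mul, mul_div_cancel₀ _ (Nat.cast_ne_zero.2 (by omega) : (n:ℝ) ≠ 0), sub_self]
  set C := ∑ i, |y0 i - μ| with hCdef
  have hC0 : 0 ≤ C := Finset.sum_nonneg fun i _ => abs_nonneg _
  have hnum : ∀ k, |y k j - μ * z k j| ≤ C * (2 * lam ^ (k / L)) := by
    intro k
    set F := fun i : Fin n => PushSum.Phi τbar P τ k 0 ((j, 0) : PushSum.V n τbar) (i, 0)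
      with hFdef
    have h1 : y k j - μ * z k j = ∑ i, (F i - F 0) * (y0 i - μ) := by
      have e1 : ∀ i, (F i - F 0) * (y0 i - μ) =
          (F i * y0 i - μ * F i) - F 0 * (y0 i - μ) := fun i => by ring
      calc y k j - μ * z k j
          = (∑ i, F i * y0 i) - μ * ∑ i, F i := by rw [hyrep, hzrep]
        _ = (∑ i, (F i * y0 i - μ * F i)) - F 0 * ∑ i, (y0 i - μ) := by
            rw [hsum0, mul_zero, sub_zero, Finset.sum_sub_distrib, Finset.mul_sum]
        _ = ∑ i, ((F i * y0 i - μ * F i) - F 0 * (y0 i - μ)) := by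
            rw [Finset.sum_sub_distrib, Finset.mul_sum, ← Finset.sum_sub_distrib,
              ← Finset.sum_sub_distrib]
        _ = ∑ i, (F i - F 0) * (y0 i - μ) :=
            (Finset.sum_congr rfl fun i _ => (e1 i).symm)
    have hFd : ∀ i : Fin n, |F i - F 0| ≤ 2 * lam ^ (k / L) := by
      intro i
      have h2 := hsp k ((i, 0) : PushSum.V n τbar) ((0 : Fin n), (0 : Fin (τbar+1)))
      refine le_trans ?_ h2
      exact Finset.single_le_sum
        (f := fun a => |PushSum.Phi τbar P τ k 0 a (i, 0) -
          PushSum.Phi τbar P τ k 0 a ((0:Fin n), (0:Fin (τbar+1)))|)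
        (fun a _ => abs_nonneg _) (Finset.mem_univ ((j, 0) : PushSum.V n τbar))
    calc |y k j - μ * z k j| = |∑ i, (F i - F 0) * (y0 i - μ)| := by rw [h1]
      _ ≤ ∑ i, |(F i - F 0) * (y0 i - μ)| := Finset.abs_sum_le_sum_abs _ _
      _ ≤ ∑ i, (2 * lam ^ (k / L)) * |y0 i - μ| := by
          apply Finset.sum_le_sum
          intro i _
          rw [abs_mul]
          exact mul_le_mul_of_nonneg_right (hFd i) (abs_nonneg _)
      _ = C * (2 * lam ^ (k / L)) := by rw [← Finset.mul_sum, mul_comm]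
  have hbound : ∀ k, L ≤ k →
      |y k j / z k j - μ| ≤ (C * 2 / ((n:ℝ) * δ)) * lam ^ (k / L) := by
    intro k hk
    have hzk : 0 < z k j := hzpos k j
    have hzklb := hzlb k hk j
    have h1 : y k j / z k j - μ = (y k j - μ * z k j) / z k j := by
      field_simp
    rw [h1, abs_div, abs_of_pos hzk]
    have hnd : 0 < (n:ℝ) * δ := mul_pos hnR hδ0
    calc |y k j - μ * z k j| / z k j ≤ (C * (2 * lam ^ (k / L))) / ((n:ℝ) * δ) :=
          div_le_div₀ (mul_nonneg hC0 (mul_nonneg (by norm_num) (pow_nonneg hlam0 _)))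
            (hnum k) hnd hzklb
      _ = (C * 2 / ((n:ℝ) * δ)) * lam ^ (k / L) := by ring
  have hdiv : Tendsto (fun k : ℕ => k / L) atTop atTop := by
    apply Filter.tendsto_atTop_atTop.2
    intro b
    exact ⟨b * L, fun k hk => (Nat.le_div_iff_mul_le hL0).2 hk⟩
  have hpowt : Tendsto (fun k : ℕ => (C * 2 / ((n:ℝ) * δ)) * lam ^ (k / L)) atTop (nhds 0) := by
    have h1 : Tendsto (fun m : ℕ => lam ^ m) atTop (nhds 0) :=
      tendsto_pow_atTop_nhds_zero_of_lt_one hlam0 hlam1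
    have h2 := (h1.comp hdiv).const_mul (C * 2 / ((n:ℝ) * δ))
    simpa using h2
  have hzero : Tendsto (fun k => y k j / z k j - μ) atTop (nhds 0) := by
    apply squeeze_zero_norm' ?_ hpowt
    refine Filter.eventually_atTop.2 ⟨L, fun k hk => ?_⟩
    rw [Real.norm_eq_abs]
    exact hbound k hk
  have hfin := hzero.add (tendsto_const_nhds (x := μ) (f := atTop))
  rw [zero_add] at hfin
  have heq : (fun k => (y k j / z k j - μ) + μ) = fun k => y k j / z k j := by
    funext k; ring
  rw [heq] at hfin
  exact hfin
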